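/- Let H be a real Hilbert space, f continuous quasiconvex, x⋆ a minimizer with value f⋆, T : H → H nonexpansive with T(x⋆) = x⋆, P_D the metric projection onto a closed convex set D containing x⋆, α_k ∈ (0,1], v_k > 0, g_k a unit vector in the normal-cone subdifferential ∂⋆f(x_k), and x_{k+1} := P_D(α_k x_k + (1 − α_k) T(x_k − v_k g_k)). If f satisfies the Hölder condition with degree β > 0 and constant L at x⋆ on cl(lev_{<f(x_k)} f) and f⋆ < f(x_k), then ‖x_{k+1} − x⋆‖² ≤ ‖x_k − x⋆‖² − 2 v_k (1 − α_k) ((f(x_k) − f⋆)/L)^{1/β} + (1 − α_k) v_k². -/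

import Mathlib

private lemma sq_convex_aux {x y zn α : ℝ} (hx : 0 ≤ x) (hy : 0 ≤ y) (hzn0 : 0 ≤ zn)
    (hα0 : 0 ≤ α) (hα1 : α ≤ 1) (h : zn ≤ α * x + (1 - α) * y) :
    zn ^ 2 ≤ α * x ^ 2 + (1 - α) * y ^ 2 := by
  have h2 : zn ^ 2 ≤ (α * x + (1 - α) * y) ^ 2 := pow_le_pow_left₀ hzn0 h 2
  have h3 : 0 ≤ α * (1 - α) * (x - y) ^ 2 :=
    mul_nonneg (mul_nonneg hα0 (by linarith)) (sq_nonneg _)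
  nlinarith [h2, h3]

private lemma combine_aux {W Z A B a r α v : ℝ} (hα0 : 0 < α) (hα1 : α ≤ 1)
    (hv : 0 < v) (hra : r ≤ a) (h1 : W ≤ Z) (h2 : Z ≤ α * A + (1 - α) * B)
    (h3 : B ≤ A - 2 * v * a + v ^ 2) :
    W ≤ A - 2 * v * (1 - α) * r + (1 - α) * v ^ 2 := by
  have hm := mul_le_mul_of_nonneg_left h3 (by linarith : (0:ℝ) ≤ 1 - α)
  have hmul : 0 ≤ (1 - α) * (2 * v) * (a - r) :=
    mul_nonneg (mul_nonneg (by linarith) (by linarith)) (by linarith)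
  nlinarith [hm, hmul]

/-- Lemma (per-step inequality) for the fixed point quasiconvex subgradient method. -/
theorem stmt_2 {H : Type*} [NormedAddCommGroup H] [InnerProductSpace ℝ H]
    (f : H → ℝ) (hcont : Continuous f)
    (hqc : ∀ u v : H, ∀ α : ℝ, α ∈ Set.Icc (0:ℝ) 1 →
      f ((1 - α) • u + α • v) ≤ max (f u) (f v))
    (fstar : ℝ) (xstar : H) (hfs : f xstar = fstar)
    (T : H → H) (hT : ∀ u v, ‖T u - T v‖ ≤ ‖u - v‖) (hTfix : T xstar = xstar)
    (D : Set H) (hDc : IsClosed D) (hDconv : Convex ℝ D) (hxD : xstar ∈ D)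
    (P : H → H) (hP : ∀ z : H, P z ∈ D ∧ ∀ y ∈ D, ‖z - P z‖ ≤ ‖z - y‖)
    (αk vk : ℝ) (hα : αk ∈ Set.Ioc (0:ℝ) 1) (hv : 0 < vk)
    (xk : H) (gk : H)
    (hgk : ∀ y : H, f y < f xk → (inner ℝ gk (y - xk) : ℝ) ≤ 0) (hgnorm : ‖gk‖ = 1)
    (xk1 : H) (hstep : xk1 = P (αk • xk + (1 - αk) • T (xk - vk • gk)))
    (β L : ℝ) (hβ : 0 < β) (hL : 0 < L)
    (hhold : ∀ z ∈ closure {w : H | f w < f xk}, |f z - fstar| ≤ L * ‖z - xstar‖ ^ β)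
    (hlt : fstar < f xk) :
    ‖xk1 - xstar‖ ^ 2 ≤ ‖xk - xstar‖ ^ 2
      - 2 * vk * (1 - αk) * ((f xk - fstar) / L) ^ (1 / β)
      + (1 - αk) * vk ^ 2 := by
  obtain ⟨hα0, hα1⟩ := hα
  set r : ℝ := ((f xk - fstar) / L) ^ (1 / β) with hrdef
  have hcf : 0 < f xk - fstar := by linarith
  have hbase : 0 < (f xk - fstar) / L := div_pos hcf hL
  have hrpos : 0 < r := Real.rpow_pos_of_pos hbase _
  have hrβ : r ^ β = (f xk - fstar) / L := by
    rw [hrdef, ← Real.rpow_mul hbase.le, one_div_mul_cancel hβ.ne', Real.rpow_one]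
  -- Step 1: the open ball of radius r around xstar is contained in the strict level set.
  have key : ∀ z : H, ‖z - xstar‖ < r → f z < f xk := by
    intro z hz
    by_contra hzc
    push_neg at hzc
    set γ : ℝ → H := fun t => xstar + t • (z - xstar) with hγ
    have hγcont : Continuous γ := by continuity
    set S : Set ℝ := Set.Icc (0:ℝ) 1 ∩ {t | f xk ≤ f (γ t)} with hS
    have hSclosed : IsClosed S :=
      isClosed_Icc.inter (isClosed_le continuous_const (hcont.comp hγcont))
    have hSne : S.Nonempty := ⟨1, ⟨by norm_num, by simpa [hγ] using hzc⟩⟩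
    have hSbdd : BddBelow S := ⟨0, fun t ht => ht.1.1⟩
    set t0 : ℝ := sInf S with ht0
    have ht0S : t0 ∈ S := hSclosed.csInf_mem hSne hSbdd
    have h0notS : (0:ℝ) ∉ S := by
      intro h
      have h2 : f xk ≤ f (γ 0) := h.2
      have h0 : f (γ 0) = fstar := by simp [hγ, hfs]
      rw [h0] at h2
      linarith
    have ht0pos : 0 < t0 := lt_of_le_of_ne ht0S.1.1 (fun h => h0notS (h ▸ ht0S))
    have ht0le1 : t0 ≤ 1 := ht0S.1.2
    -- γ t0 is in the closure of the strict level set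
    have hmem : γ t0 ∈ closure {w : H | f w < f xk} := by
      have htend : Filter.Tendsto γ (nhdsWithin t0 (Set.Iio t0)) (nhds (γ t0)) :=
        (hγcont.tendsto t0).mono_left nhdsWithin_le_nhds
      refine mem_closure_of_tendsto htend ?_
      have hIoo : Set.Ioo 0 t0 ∈ nhdsWithin t0 (Set.Iio t0) :=
        Ioo_mem_nhdsLT_of_mem ⟨ht0pos, le_refl _⟩
      filter_upwards [hIoo] with t ht
      have htIcc : t ∈ Set.Icc (0:ℝ) 1 := ⟨ht.1.le, le_trans ht.2.le ht0le1⟩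
      have htnotS : t ∉ S := fun h => absurd (csInf_le hSbdd h) (not_le.mpr ht.2)
      have : ¬ f xk ≤ f (γ t) := fun h => htnotS ⟨htIcc, h⟩
      exact lt_of_not_ge this
    have hhw := hhold _ hmem
    have hnw : ‖γ t0 - xstar‖ < r := by
      have : γ t0 - xstar = t0 • (z - xstar) := by simp [hγ]
      rw [this, norm_smul, Real.norm_eq_abs, abs_of_pos ht0pos]
      calc t0 * ‖z - xstar‖ ≤ 1 * ‖z - xstar‖ := by
            apply mul_le_mul_of_nonneg_right ht0le1 (norm_nonneg _)
        _ = ‖z - xstar‖ := one_mul _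
        _ < r := hz
    have hpow : ‖γ t0 - xstar‖ ^ β < r ^ β :=
      Real.rpow_lt_rpow (norm_nonneg _) hnw hβ
    rw [hrβ] at hpow
    have : L * ‖γ t0 - xstar‖ ^ β < f xk - fstar := by
      have := (mul_lt_mul_iff_right₀ hL).mpr hpow
      rwa [mul_div_cancel₀ _ hL.ne'] at this
    have hft0 : f xk ≤ f (γ t0) := ht0S.2
    have habs : f xk - fstar ≤ |f (γ t0) - fstar| := by
      rw [abs_of_nonneg (by linarith : (0:ℝ) ≤ f (γ t0) - fstar)]
      linarith
    linarith
  -- Step 2: inner product bound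
  have hinner : r ≤ (inner ℝ gk (xk - xstar) : ℝ) := by
    by_contra h
    push_neg at h
    set a : ℝ := (inner ℝ gk (xk - xstar) : ℝ) with ha
    set s : ℝ := max (r/2) ((a + r)/2) with hs
    have hs_pos : 0 < s := lt_of_lt_of_le (by linarith) (le_max_left _ _)
    have hs_lt : s < r := max_lt (by linarith) (by linarith)
    have hs_gt : a < s := lt_of_lt_of_le (by linarith) (le_max_right _ _)
    have hfz : f (xstar + s • gk) < f xk := by
      apply key
      rw [add_sub_cancel_left, norm_smul, Real.norm_eq_abs, abs_of_pos hs_pos,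
        hgnorm, mul_one]
      exact hs_lt
    have hle := hgk _ hfz
    have hexp : (inner ℝ gk (xstar + s • gk - xk) : ℝ) = -a + s := by
      have h1 : xstar + s • gk - xk = s • gk - (xk - xstar) := by abel
      rw [h1, inner_sub_right, real_inner_smul_right, real_inner_self_eq_norm_sq,
        hgnorm]
      ring_nf
      rw [ha]
    rw [hexp] at hle
    linarith
  -- Step 3: projection decreases distance to xstar
  set z : H := αk • xk + (1 - αk) • T (xk - vk • gk) with hz
  have hproj : ‖P z - xstar‖ ^ 2 ≤ ‖z - xstar‖ ^ 2 := by
    have : Nonempty D := ⟨⟨xstar, hxD⟩⟩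
    have hinf : ‖z - P z‖ = ⨅ w : D, ‖z - w‖ := by
      apply le_antisymm
      · exact le_ciInf fun w => (hP z).2 w w.2
      · have hbdd : BddBelow (Set.range fun w : D => ‖z - (w : H)‖) := by
          refine ⟨0, ?_⟩
          rintro x ⟨w, rfl⟩
          exact norm_nonneg _
        exact ciInf_le hbdd ⟨P z, (hP z).1⟩
    have hvar : (inner ℝ (z - P z) (xstar - P z) : ℝ) ≤ 0 :=
      (norm_eq_iInf_iff_real_inner_le_zero hDconv (hP z).1).mp hinf xstar hxD
    have hdecomp : z - xstar = (z - P z) + (P z - xstar) := by abel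
    have hsq : ‖z - xstar‖ ^ 2 =
        ‖z - P z‖ ^ 2 + 2 * (inner ℝ (z - P z) (P z - xstar) : ℝ) + ‖P z - xstar‖ ^ 2 := by
      rw [hdecomp, @norm_add_sq_real]
    have hflip : (inner ℝ (z - P z) (P z - xstar) : ℝ) = -(inner ℝ (z - P z) (xstar - P z) : ℝ) := by
      rw [← inner_neg_right]; congr 1; abel
    nlinarith [sq_nonneg ‖z - P z‖]
  -- Step 4: nonexpansiveness of T
  set b : H := T (xk - vk • gk) with hb
  have hbB : ‖b - xstar‖ ≤ ‖xk - vk • gk - xstar‖ := by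
    have := hT (xk - vk • gk) xstar
    rwa [hTfix] at this
  have hbsq : ‖xk - vk • gk - xstar‖ ^ 2
      = ‖xk - xstar‖ ^ 2 - 2 * vk * (inner ℝ gk (xk - xstar) : ℝ) + vk ^ 2 := by
    have h1 : xk - vk • gk - xstar = (xk - xstar) - vk • gk := by abel
    rw [h1, @norm_sub_sq_real, real_inner_smul_right, norm_smul, Real.norm_eq_abs,
      abs_of_pos hv, hgnorm, real_inner_comm]
    ring
  -- Step 5: convexity of squared norm
  have hzdecomp : z - xstar = αk • (xk - xstar) + (1 - αk) • (b - xstar) := by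
    rw [hz, hb]; module
  have hznorm : ‖z - xstar‖ ≤ αk * ‖xk - xstar‖ + (1 - αk) * ‖b - xstar‖ := by
    rw [hzdecomp]
    calc ‖αk • (xk - xstar) + (1 - αk) • (b - xstar)‖
        ≤ ‖αk • (xk - xstar)‖ + ‖(1 - αk) • (b - xstar)‖ := norm_add_le _ _
      _ = αk * ‖xk - xstar‖ + (1 - αk) * ‖b - xstar‖ := by
          rw [norm_smul, norm_smul, Real.norm_eq_abs, Real.norm_eq_abs,
            abs_of_pos hα0, abs_of_nonneg (by linarith)]
  have hzsq : ‖z - xstar‖ ^ 2 ≤ αk * ‖xk - xstar‖ ^ 2 + (1 - αk) * ‖b - xstar‖ ^ 2 :=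
    sq_convex_aux (norm_nonneg _) (norm_nonneg _) (norm_nonneg _) hα0.le hα1 hznorm
  -- combine
  have hbsq' : ‖b - xstar‖ ^ 2 ≤ ‖xk - xstar‖ ^ 2 - 2 * vk * (inner ℝ gk (xk - xstar) : ℝ) + vk ^ 2 := by
    rw [← hbsq]
    exact pow_le_pow_left₀ (norm_nonneg _) hbB 2
  have hfinal : ‖xk1 - xstar‖ ^ 2 ≤ ‖z - xstar‖ ^ 2 := by
    rw [hstep]; exact hproj
  exact combine_aux hα0 hα1 hv hinner hfinal hzsq hbsq'
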